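/- Let ⟨Bₙ⟩ be an increasing sequence of positive real numbers such that Bₘ·Bₙ ≤ B₀·B_{m+n} for all m, n ≥ 0. Let φ and ψ be formal power series with complex coefficients satisfying φ ≺ ⟨n!Bₙ⟩ and ψ ≺ ⟨n!Bₙ⟩, and let f be an entire function with f ≺ ⟨(n!Bₙ)^{−1}⟩. Then: (i) the product power series φψ satisfies φψ ≺ ⟨n!Bₙ⟩; (ii) f ∈ dom φ(D); (iii) φ(D)f ≺ ⟨(n!Bₙ)^{−1}⟩; and (iv) φ(D)f ∈ dom ψ(D) with ψ(D)(φ(D)f) = (φψ)(D)f. -/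

import Mathlib

open Nat

section StmtAux
open Finset Filter
variable {B : ℕ → ℝ}

noncomputable def Mf (e r : ℝ) : ℝ := ∑' k : ℕ, (1 + (k:ℝ)) ^ e * r ^ k / (k !)

lemma summable_mf {e r : ℝ} (he : 0 ≤ e) (hr : 0 ≤ r) :
    Summable (fun k : ℕ => (1 + (k:ℝ)) ^ e * r ^ k / (k !)) := by
  apply summable_of_ratio_norm_eventually_le (r := 1/2) (by norm_num)
  filter_upwards [eventually_ge_atTop ⌈2 * (2:ℝ)^e * r⌉₊] with k hk
  have hk' : 2 * (2:ℝ)^e * r ≤ (k:ℝ) + 1 := by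
    calc 2 * (2:ℝ)^e * r ≤ (⌈2 * (2:ℝ)^e * r⌉₊ : ℝ) := Nat.le_ceil _
    _ ≤ (k:ℝ) := by exact_mod_cast hk
    _ ≤ (k:ℝ) + 1 := by linarith
  have h2 : (1 + ((k:ℝ)+1)) ^ e ≤ 2^e * (1+(k:ℝ))^e := by
    rw [← Real.mul_rpow (by norm_num) (by positivity)]
    exact Real.rpow_le_rpow (by positivity) (by linarith) he
  have hfpos : (0:ℝ) < (k ! : ℝ) := by exact_mod_cast Nat.factorial_pos k
  rw [Real.norm_of_nonneg (by positivity), Real.norm_of_nonneg (by positivity)]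
  have hfs : (((k+1) ! : ℕ) : ℝ) = ((k:ℝ)+1) * (k !) := by
    push_cast [Nat.factorial_succ]; ring
  have hcast : ((k+1 : ℕ) : ℝ) = (k:ℝ)+1 := by push_cast; ring
  rw [hfs, hcast, div_le_iff₀ (by positivity)]
  have key : (2:ℝ)^e * r ≤ (1/2) * ((k:ℝ)+1) := by linarith
  calc (1 + ((k:ℝ)+1))^e * r^(k+1)
      ≤ (2^e * (1+(k:ℝ))^e) * (r^k * r) := by
        rw [pow_succ]
        exact mul_le_mul_of_nonneg_right h2 (by positivity)
    _ = (2^e * r) * ((1+(k:ℝ))^e * r^k) := by ring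
    _ ≤ ((1/2) * ((k:ℝ)+1)) * ((1+(k:ℝ))^e * r^k) :=
        mul_le_mul_of_nonneg_right key (by positivity)
    _ = 1/2 * ((1+(k:ℝ))^e * r^k / (k !)) * (((k:ℝ)+1) * (k !)) := by
        field_simp

lemma Mf_nonneg {e r : ℝ} (he : 0 ≤ e) (hr : 0 ≤ r) : 0 ≤ Mf e r :=
  tsum_nonneg fun k => by positivity

lemma diff_deriv {f : ℂ → ℂ} (hf : Differentiable ℂ f) : Differentiable ℂ (deriv f) :=
  Complex.analyticOnNhd_univ_iff_differentiable.mp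
    ((Complex.analyticOnNhd_univ_iff_differentiable.mpr hf).deriv)

lemma diff_iter {f : ℂ → ℂ} (hf : Differentiable ℂ f) (n : ℕ) :
    Differentiable ℂ (iteratedDeriv n f) := by
  induction n with
  | zero => simpa
  | succ n ih => rw [iteratedDeriv_succ]; exact diff_deriv ih

lemma iter_comp (f : ℂ → ℂ) (n k : ℕ) :
    iteratedDeriv k (iteratedDeriv n f) = iteratedDeriv (n + k) f := by
  induction k with
  | zero => simp
  | succ k ih =>
    rw [iteratedDeriv_succ, ih, show n + (k+1) = (n+k)+1 from rfl, iteratedDeriv_succ]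

lemma exp_add_le {e : ℝ} (he : 0 ≤ e) (m n : ℕ) :
    (1 + ((m:ℝ) + n)) ^ e ≤ (1 + (m:ℝ)) ^ e * (1 + (n:ℝ)) ^ e := by
  rw [← Real.mul_rpow (by positivity) (by positivity)]
  have hm : (0:ℝ) ≤ (m:ℝ) := Nat.cast_nonneg m
  have hn : (0:ℝ) ≤ (n:ℝ) := Nat.cast_nonneg n
  apply Real.rpow_le_rpow (by positivity) (by nlinarith) he

lemma fBpos {B : ℕ → ℝ} (hBpos : ∀ n, 0 < B n) (n : ℕ) : (0:ℝ) < (n ! : ℝ) * B n :=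
  mul_pos (by exact_mod_cast Nat.factorial_pos n) (hBpos n)

lemma term_est {B : ℕ → ℝ} (hBpos : ∀ n, 0 < B n)
    (hBsub : ∀ m n : ℕ, B m * B n ≤ B 0 * B (m + n)) {e : ℝ} (he : 0 ≤ e) (m n : ℕ) :
    (1 + ((m:ℝ) + n)) ^ e * (((m+n)! : ℝ) * B (m+n))⁻¹ ≤
      B 0 * ((1 + (m:ℝ)) ^ e * ((m ! : ℝ) * B m)⁻¹) * ((1 + (n:ℝ)) ^ e * ((n ! : ℝ) * B n)⁻¹) := by
  have hfac : ((m ! : ℝ) * (n !)) ≤ ((m+n)! : ℝ) := by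
    exact_mod_cast Nat.le_of_dvd (Nat.factorial_pos _) (Nat.factorial_mul_factorial_dvd_factorial_add m n)
  have hB0 := hBpos 0
  have hY : (0:ℝ) < (m ! : ℝ) * B m * ((n ! : ℝ) * B n) := mul_pos (fBpos hBpos m) (fBpos hBpos n)
  have hprod : (m ! : ℝ) * B m * ((n ! : ℝ) * B n) ≤ B 0 * (((m+n)! : ℝ) * B (m+n)) := by
    have h1 : ((m ! : ℝ) * (n !)) * (B m * B n) ≤ ((m+n)! : ℝ) * (B 0 * B (m+n)) := by
      apply mul_le_mul hfac (hBsub m n) (mul_pos (hBpos m) (hBpos n)).le (by positivity)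
    calc (m ! : ℝ) * B m * ((n ! : ℝ) * B n) = ((m ! : ℝ) * (n !)) * (B m * B n) := by ring
      _ ≤ ((m+n)! : ℝ) * (B 0 * B (m+n)) := h1
      _ = B 0 * (((m+n)! : ℝ) * B (m+n)) := by ring
  have hinv : (((m+n)! : ℝ) * B (m+n))⁻¹ ≤ B 0 * ((m ! : ℝ) * B m * ((n ! : ℝ) * B n))⁻¹ := by
    rw [← div_eq_mul_inv, le_div_iff₀ hY, inv_mul_eq_div, div_le_iff₀ (fBpos hBpos (m+n))]
    linarith [hprod]
  calc (1 + ((m:ℝ) + n)) ^ e * (((m+n)! : ℝ) * B (m+n))⁻¹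
      ≤ ((1 + (m:ℝ)) ^ e * (1 + (n:ℝ)) ^ e) * (B 0 * ((m ! : ℝ) * B m * ((n ! : ℝ) * B n))⁻¹) := by
        apply mul_le_mul (exp_add_le he m n) hinv (inv_nonneg.mpr (fBpos hBpos (m+n)).le) (by positivity)
    _ = B 0 * ((1 + (m:ℝ)) ^ e * ((m ! : ℝ) * B m)⁻¹) * ((1 + (n:ℝ)) ^ e * ((n ! : ℝ) * B n)⁻¹) := by
        rw [mul_inv]; ring

lemma deriv_bound (hBpos : ∀ n, 0 < B n) (hBmono : Monotone B) {f : ℂ → ℂ} {c e : ℝ}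
    (hf : Differentiable ℂ f) (hc : 0 ≤ c) (he : 0 ≤ e)
    (hbd : ∀ n, ‖iteratedDeriv n f 0‖ ≤ c * (1+(n:ℝ))^e * ((n ! : ℝ) * B n)⁻¹)
    {R : ℝ} (hR : 0 ≤ R) (n : ℕ) {z : ℂ} (hz : ‖z‖ ≤ R) :
    ‖iteratedDeriv n f z‖ ≤ (c * Mf e R) * (1+(n:ℝ))^e * ((n ! : ℝ) * B n)⁻¹ := by
  have hs := Complex.hasSum_taylorSeries_of_entire (diff_iter hf n) 0 z
  simp only [iter_comp, sub_zero] at hs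
  have hBn := (fBpos hBpos n)
  set C := c * (1+(n:ℝ))^e * ((n ! :ℝ) * B n)⁻¹ with hC
  have hCnn : 0 ≤ C := by
    have := inv_nonneg.mpr hBn.le; positivity
  have hterm : ∀ k : ℕ, ‖(k ! : ℂ)⁻¹ • z^k • iteratedDeriv (n+k) f 0‖
      ≤ C * ((1+(k:ℝ))^e * R^k / (k !)) := by
    intro k
    have hd : ‖iteratedDeriv (n+k) f 0‖
        ≤ c * ((1+(n:ℝ))^e * (1+(k:ℝ))^e) * ((n ! : ℝ) * B n)⁻¹ := by
      refine (hbd (n+k)).trans ?_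
      have h1 : (1+((n+k : ℕ):ℝ))^e ≤ (1+(n:ℝ))^e * (1+(k:ℝ))^e := by
        push_cast; exact exp_add_le he n k
      have h2 : (((n+k)! : ℝ) * B (n+k))⁻¹ ≤ ((n ! : ℝ) * B n)⁻¹ := by
        apply inv_anti₀ hBn
        exact mul_le_mul (by exact_mod_cast Nat.factorial_le (Nat.le_add_right n k))
          (hBmono (Nat.le_add_right n k)) (hBpos n).le (Nat.cast_nonneg _)
      exact mul_le_mul (mul_le_mul_of_nonneg_left h1 hc) h2
        (inv_nonneg.mpr (fBpos hBpos (n+k)).le) (by positivity)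
    rw [norm_smul, norm_smul, norm_inv, Complex.norm_natCast, norm_pow]
    calc ((k ! : ℝ))⁻¹ * (‖z‖ ^ k * ‖iteratedDeriv (n+k) f 0‖)
        ≤ ((k ! : ℝ))⁻¹ * (R^k * (c * ((1+(n:ℝ))^e * (1+(k:ℝ))^e) * ((n ! : ℝ) * B n)⁻¹)) := by
          have hfk : (0:ℝ) < (k ! : ℝ) := by exact_mod_cast Nat.factorial_pos k
          apply mul_le_mul_of_nonneg_left _ (inv_nonneg.mpr hfk.le)
          apply mul_le_mul (pow_le_pow_left₀ (norm_nonneg z) hz k) hd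
            (norm_nonneg _) (by positivity)
      _ = C * ((1+(k:ℝ))^e * R^k / (k !)) := by
          rw [hC, div_eq_mul_inv]; ring
  have hsum : Summable (fun k : ℕ => C * ((1+(k:ℝ))^e * R^k / (k !))) :=
    (summable_mf he hR).mul_left C
  have hnorm : Summable (fun k : ℕ => ‖(k ! : ℂ)⁻¹ • z^k • iteratedDeriv (n+k) f 0‖) :=
    Summable.of_nonneg_of_le (fun k => norm_nonneg _) hterm hsum
  calc ‖iteratedDeriv n f z‖ = ‖∑' k : ℕ, (k ! : ℂ)⁻¹ • z^k • iteratedDeriv (n+k) f 0‖ := by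
        rw [hs.tsum_eq]
    _ ≤ ∑' k : ℕ, ‖(k ! : ℂ)⁻¹ • z^k • iteratedDeriv (n+k) f 0‖ := norm_tsum_le_tsum_norm hnorm
    _ ≤ ∑' k : ℕ, C * ((1+(k:ℝ))^e * R^k / (k !)) := Summable.tsum_le_tsum hterm hnorm hsum
    _ = C * Mf e R := by rw [tsum_mul_left]; rfl
    _ = (c * Mf e R) * (1+(n:ℝ))^e * ((n ! : ℝ) * B n)⁻¹ := by rw [hC]; ring

lemma convSum (hBpos : ∀ n, 0 < B n) (hBmono : Monotone B) {f : ℂ → ℂ} {c e : ℝ}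
    (hf : Differentiable ℂ f) (hc : 0 ≤ c) (he : 0 ≤ e)
    (hbd : ∀ n, ‖iteratedDeriv n f 0‖ ≤ c * (1+(n:ℝ))^e * ((n ! : ℝ) * B n)⁻¹)
    {a : ℕ → ℂ} {c' e' : ℝ} (hc' : 0 ≤ c') (he' : 0 ≤ e')
    (ha : ∀ n, ‖a n‖ ≤ c' * (1+(n:ℝ))^e' * B n) :
    TendstoLocallyUniformly
      (fun (N : ℕ) (z : ℂ) => ∑ n ∈ Finset.range N, a n * iteratedDeriv n f z)
      (fun z => ∑' n : ℕ, a n * iteratedDeriv n f z) Filter.atTop := by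
  rw [← tendstoLocallyUniformlyOn_univ, tendstoLocallyUniformlyOn_iff_forall_isCompact isOpen_univ]
  intro K _ hK
  obtain ⟨R, hR⟩ := hK.isBounded.subset_closedBall 0
  have hsub : K ⊆ Metric.closedBall 0 (max R 0) :=
    hR.trans (Metric.closedBall_subset_closedBall (le_max_left _ _))
  set R' := max R 0 with hR'
  have hR'0 : 0 ≤ R' := le_max_right _ _
  apply TendstoUniformlyOn.mono _ hsub
  apply tendstoUniformlyOn_tsum_nat
    (u := fun n => (c' * (1+(n:ℝ))^e' * B n) * ((c * Mf e R') * (1+(n:ℝ))^e * ((n ! : ℝ) * B n)⁻¹))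
  · apply Summable.congr (((summable_mf (e := e + e') (r := 1) (by linarith) zero_le_one).mul_left
      (c' * (c * Mf e R'))))
    intro n
    have h1 : (0:ℝ) < 1 + (n:ℝ) := by positivity
    have h2 : ((n !:ℝ)) ≠ 0 := by positivity
    have h3 : B n ≠ 0 := (hBpos n).ne'
    rw [Real.rpow_add h1]
    field_simp
    ring
  · intro n z hz
    rw [norm_mul]
    have hz' : ‖z‖ ≤ R' := by
      have := Metric.mem_closedBall.mp hz
      rwa [Complex.dist_eq, sub_zero] at this
    apply mul_le_mul (ha n) (deriv_bound hBpos hBmono hf hc he hbd hR'0 n hz')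
      (norm_nonneg _) ?_
    have := (hBpos n).le
    positivity

lemma sum_diff {f : ℂ → ℂ} (hf : Differentiable ℂ f) (a : ℕ → ℂ) (N : ℕ) :
    Differentiable ℂ (fun z => ∑ n ∈ Finset.range N, a n * iteratedDeriv n f z) := by
  apply Differentiable.fun_sum
  intro i _
  exact (diff_iter hf i).const_mul (a i)

lemma bd_shift (hBpos : ∀ n, 0 < B n) (hBmono : Monotone B) {f : ℂ → ℂ} {c e : ℝ}
    (hc : 0 ≤ c) (he : 0 ≤ e)
    (hbd : ∀ n, ‖iteratedDeriv n f 0‖ ≤ c * (1+(n:ℝ))^e * ((n ! : ℝ) * B n)⁻¹) :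
    ∀ n, ‖iteratedDeriv n (deriv f) 0‖
      ≤ (c * 2^e) * (1+(n:ℝ))^e * ((n ! : ℝ) * B n)⁻¹ := by
  intro n
  rw [← iteratedDeriv_succ']
  refine (hbd (n+1)).trans ?_
  have h1 : (1+((n+1 : ℕ):ℝ))^e ≤ 2^e * (1+(n:ℝ))^e := by
    push_cast
    rw [← Real.mul_rpow (by norm_num) (by positivity)]
    exact Real.rpow_le_rpow (by positivity) (by linarith [Nat.cast_nonneg (α := ℝ) n]) he
  have h2 : (((n+1)! : ℝ) * B (n+1))⁻¹ ≤ ((n ! : ℝ) * B n)⁻¹ := by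
    apply inv_anti₀ (fBpos hBpos n)
    exact mul_le_mul (by exact_mod_cast Nat.factorial_le (Nat.le_succ n))
      (hBmono (Nat.le_succ n)) (hBpos n).le (Nat.cast_nonneg _)
  calc c * (1+((n+1:ℕ):ℝ))^e * (((n+1)! : ℝ) * B (n+1))⁻¹
      ≤ c * (2^e * (1+(n:ℝ))^e) * ((n ! : ℝ) * B n)⁻¹ :=
        mul_le_mul (mul_le_mul_of_nonneg_left h1 hc) h2
          (inv_nonneg.mpr (fBpos hBpos (n+1)).le) (by positivity)
    _ = (c * 2^e) * (1+(n:ℝ))^e * ((n ! : ℝ) * B n)⁻¹ := by ring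

lemma gf_diff (hBpos : ∀ n, 0 < B n) (hBmono : Monotone B) {f : ℂ → ℂ} {c e : ℝ}
    (hf : Differentiable ℂ f) (hc : 0 ≤ c) (he : 0 ≤ e)
    (hbd : ∀ n, ‖iteratedDeriv n f 0‖ ≤ c * (1+(n:ℝ))^e * ((n ! : ℝ) * B n)⁻¹)
    {a : ℕ → ℂ} {c' e' : ℝ} (hc' : 0 ≤ c') (he' : 0 ≤ e')
    (ha : ∀ n, ‖a n‖ ≤ c' * (1+(n:ℝ))^e' * B n) :
    Differentiable ℂ (fun z => ∑' n : ℕ, a n * iteratedDeriv n f z) := by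
  have h := convSum hBpos hBmono hf hc he hbd hc' he' ha
  rw [← tendstoLocallyUniformlyOn_univ] at h
  rw [← differentiableOn_univ]
  exact h.differentiableOn (Eventually.of_forall fun N => (sum_diff hf a N).differentiableOn)
    isOpen_univ

lemma gf_deriv (hBpos : ∀ n, 0 < B n) (hBmono : Monotone B) {f : ℂ → ℂ} {c e : ℝ}
    (hf : Differentiable ℂ f) (hc : 0 ≤ c) (he : 0 ≤ e)
    (hbd : ∀ n, ‖iteratedDeriv n f 0‖ ≤ c * (1+(n:ℝ))^e * ((n ! : ℝ) * B n)⁻¹)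
    {a : ℕ → ℂ} {c' e' : ℝ} (hc' : 0 ≤ c') (he' : 0 ≤ e')
    (ha : ∀ n, ‖a n‖ ≤ c' * (1+(n:ℝ))^e' * B n) :
    deriv (fun z => ∑' n : ℕ, a n * iteratedDeriv n f z)
      = fun z => ∑' n : ℕ, a n * iteratedDeriv n (deriv f) z := by
  have h := convSum hBpos hBmono hf hc he hbd hc' he' ha
  rw [← tendstoLocallyUniformlyOn_univ] at h
  have h2 := h.deriv (Eventually.of_forall fun N => (sum_diff hf a N).differentiableOn)
    isOpen_univ
  have h3 : (deriv ∘ fun (N : ℕ) (z : ℂ) => ∑ n ∈ Finset.range N, a n * iteratedDeriv n f z)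
      = fun (N : ℕ) (z : ℂ) => ∑ n ∈ Finset.range N, a n * iteratedDeriv n (deriv f) z := by
    funext N z
    simp only [Function.comp_apply]
    rw [deriv_fun_sum (fun i _ => ((diff_iter hf i).const_mul (a i)).differentiableAt)]
    congr 1
    funext i
    rw [deriv_const_mul _ (diff_iter hf i).differentiableAt, iteratedDeriv_succ.symm,
      iteratedDeriv_succ']
  rw [h3] at h2
  have h4 := convSum hBpos hBmono (diff_deriv hf) (by positivity) he
    (bd_shift hBpos hBmono hc he hbd) hc' he' ha
  rw [← tendstoLocallyUniformlyOn_univ] at h4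
  funext z
  exact tendsto_nhds_unique (h2.tendsto_at (Set.mem_univ z)) (h4.tendsto_at (Set.mem_univ z))

lemma iter_gf (hBpos : ∀ n, 0 < B n) (hBmono : Monotone B)
    {a : ℕ → ℂ} {c' e' : ℝ} (hc' : 0 ≤ c') (he' : 0 ≤ e')
    (ha : ∀ n, ‖a n‖ ≤ c' * (1+(n:ℝ))^e' * B n) :
    ∀ (m : ℕ) {f : ℂ → ℂ} {c e : ℝ}, Differentiable ℂ f → 0 ≤ c → 0 ≤ e →
    (∀ n, ‖iteratedDeriv n f 0‖ ≤ c * (1+(n:ℝ))^e * ((n ! : ℝ) * B n)⁻¹) →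
    iteratedDeriv m (fun z => ∑' n : ℕ, a n * iteratedDeriv n f z)
      = fun z => ∑' n : ℕ, a n * iteratedDeriv (n + m) f z := by
  intro m
  induction m with
  | zero => intro f c e hf hc he hbd; simp [iteratedDeriv_zero]
  | succ m ih =>
    intro f c e hf hc he hbd
    rw [iteratedDeriv_succ', gf_deriv hBpos hBmono hf hc he hbd hc' he' ha,
      ih (diff_deriv hf) (by positivity : (0:ℝ) ≤ c * 2^e) he (bd_shift hBpos hBmono hc he hbd)]
    funext z
    congr 1
    funext n
    rw [show n + (m+1) = (n + m) + 1 from rfl, iteratedDeriv_succ']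

lemma gf_bound (hBpos : ∀ n, 0 < B n) (hBmono : Monotone B)
    (hBsub : ∀ m n : ℕ, B m * B n ≤ B 0 * B (m + n)) {f : ℂ → ℂ} {c e : ℝ}
    (hf : Differentiable ℂ f) (hc : 0 ≤ c) (he : 0 ≤ e)
    (hbd : ∀ n, ‖iteratedDeriv n f 0‖ ≤ c * (1+(n:ℝ))^e * ((n ! : ℝ) * B n)⁻¹)
    {a : ℕ → ℂ} {c' e' : ℝ} (hc' : 0 ≤ c') (he' : 0 ≤ e')
    (ha : ∀ n, ‖a n‖ ≤ c' * (1+(n:ℝ))^e' * B n) (m : ℕ) :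
    ‖iteratedDeriv m (fun z => ∑' n : ℕ, a n * iteratedDeriv n f z) 0‖
      ≤ (c * c' * B 0 * Mf (e+e') 1) * (1+(m:ℝ))^e * ((m ! : ℝ) * B m)⁻¹ := by
  rw [iter_gf hBpos hBmono hc' he' ha m hf hc he hbd]
  set Cm := c * c' * B 0 * (1+(m:ℝ))^e * ((m ! : ℝ) * B m)⁻¹ with hCm
  have hBm := fBpos hBpos m
  have hB0 := hBpos 0
  have hCmnn : 0 ≤ Cm := by
    have := inv_nonneg.mpr hBm.le
    positivity
  have hterm : ∀ n : ℕ, ‖a n * iteratedDeriv (n + m) f 0‖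
      ≤ Cm * ((1+(n:ℝ))^(e+e') * (1:ℝ)^n / (n !)) := by
    intro n
    have hBn := fBpos hBpos n
    rw [norm_mul]
    have hd : ‖iteratedDeriv (n + m) f 0‖
        ≤ c * (B 0 * ((1 + (n:ℝ)) ^ e * ((n ! : ℝ) * B n)⁻¹) * ((1 + (m:ℝ)) ^ e * ((m ! : ℝ) * B m)⁻¹)) := by
      refine (hbd (n+m)).trans ?_
      have h2 := term_est hBpos hBsub he n m
      calc c * (1+((n+m : ℕ):ℝ))^e * (((n+m)! : ℝ) * B (n+m))⁻¹
          = c * ((1 + ((n:ℝ) + m)) ^ e * (((n+m)! : ℝ) * B (n+m))⁻¹) := by push_cast; ring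
        _ ≤ c * (B 0 * ((1 + (n:ℝ)) ^ e * ((n ! : ℝ) * B n)⁻¹) * ((1 + (m:ℝ)) ^ e * ((m ! : ℝ) * B m)⁻¹)) :=
            mul_le_mul_of_nonneg_left h2 hc
    calc ‖a n‖ * ‖iteratedDeriv (n + m) f 0‖
        ≤ (c' * (1+(n:ℝ))^e' * B n) *
          (c * (B 0 * ((1 + (n:ℝ)) ^ e * ((n ! : ℝ) * B n)⁻¹) * ((1 + (m:ℝ)) ^ e * ((m ! : ℝ) * B m)⁻¹))) := by
          apply mul_le_mul (ha n) hd (norm_nonneg _) ?_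
          have := (hBpos n).le
          positivity
      _ = Cm * ((1+(n:ℝ))^(e+e') * (1:ℝ)^n / (n !)) := by
          rw [hCm, Real.rpow_add (by positivity : (0:ℝ) < 1 + (n:ℝ))]
          have h4 : ((n !:ℝ)) ≠ 0 := by positivity
          have h5 : B n ≠ 0 := (hBpos n).ne'
          field_simp
          ring
  have hsum : Summable (fun n : ℕ => Cm * ((1+(n:ℝ))^(e+e') * (1:ℝ)^n / (n !))) :=
    (summable_mf (by linarith) zero_le_one).mul_left Cm
  have hnorm : Summable (fun n : ℕ => ‖a n * iteratedDeriv (n + m) f 0‖) :=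
    Summable.of_nonneg_of_le (fun k => norm_nonneg _) hterm hsum
  calc ‖∑' n : ℕ, a n * iteratedDeriv (n + m) f 0‖
      ≤ ∑' n : ℕ, ‖a n * iteratedDeriv (n + m) f 0‖ := norm_tsum_le_tsum_norm hnorm
    _ ≤ ∑' n : ℕ, Cm * ((1+(n:ℝ))^(e+e') * (1:ℝ)^n / (n !)) := Summable.tsum_le_tsum hterm hnorm hsum
    _ = Cm * Mf (e+e') 1 := by rw [tsum_mul_left]; rfl
    _ = (c * c' * B 0 * Mf (e+e') 1) * (1+(m:ℝ))^e * ((m ! : ℝ) * B m)⁻¹ := by rw [hCm]; ring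

lemma tsum_antidiag {u : ℕ × ℕ → ℂ} (hu : Summable u) :
    ∑' p : ℕ × ℕ, u p = ∑' N : ℕ, ∑ p ∈ Finset.HasAntidiagonal.antidiagonal N, u p := by
  rw [← Finset.HasAntidiagonal.sigmaAntidiagonalEquivProd.tsum_eq u]
  rw [show (fun c : (n : ℕ) × { x // x ∈ Finset.HasAntidiagonal.antidiagonal n } => u (Finset.HasAntidiagonal.sigmaAntidiagonalEquivProd c))
      = u ∘ Finset.HasAntidiagonal.sigmaAntidiagonalEquivProd from rfl,
    Summable.tsum_sigma' (fun N => Summable.of_finite)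
    (Finset.HasAntidiagonal.sigmaAntidiagonalEquivProd.summable_iff.mpr hu)]
  congr 1
  funext N
  exact Finset.tsum_subtype (Finset.HasAntidiagonal.antidiagonal N) u

lemma coeff_mul_bound (hBpos : ∀ n, 0 < B n)
    (hBsub : ∀ m n : ℕ, B m * B n ≤ B 0 * B (m + n))
    {a b : ℕ → ℂ} {c1 e1 c2 e2 : ℝ} (hc1 : 0 ≤ c1) (he1 : 0 ≤ e1) (hc2 : 0 ≤ c2) (he2 : 0 ≤ e2)
    (ha : ∀ n, ‖a n‖ ≤ c1 * (1+(n:ℝ))^e1 * B n)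
    (hb : ∀ n, ‖b n‖ ≤ c2 * (1+(n:ℝ))^e2 * B n) (N : ℕ) :
    ‖∑ p ∈ Finset.HasAntidiagonal.antidiagonal N, a p.1 * b p.2‖
      ≤ (c1 * c2 * B 0) * (1+(N:ℝ))^(e1+e2+1) * B N := by
  have hBN := hBpos N
  have hB0 := hBpos 0
  calc ‖∑ p ∈ Finset.HasAntidiagonal.antidiagonal N, a p.1 * b p.2‖
      ≤ ∑ p ∈ Finset.HasAntidiagonal.antidiagonal N, ‖a p.1 * b p.2‖ :=
        norm_sum_le _ _
    _ ≤ ∑ _p ∈ Finset.HasAntidiagonal.antidiagonal N, (c1 * c2 * B 0) * ((1+(N:ℝ))^e1 * (1+(N:ℝ))^e2) * B N := by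
        apply Finset.sum_le_sum
        intro p hp
        have hpN := Finset.HasAntidiagonal.mem_antidiagonal.mp hp
        have hp1 : (p.1 : ℝ) ≤ N := by exact_mod_cast hpN ▸ Nat.le_add_right p.1 p.2
        have hp2 : (p.2 : ℝ) ≤ N := by exact_mod_cast hpN ▸ Nat.le_add_left p.2 p.1
        have h1 : (1+(p.1:ℝ))^e1 ≤ (1+(N:ℝ))^e1 :=
          Real.rpow_le_rpow (by positivity) (by linarith) he1
        have h2 : (1+(p.2:ℝ))^e2 ≤ (1+(N:ℝ))^e2 :=
          Real.rpow_le_rpow (by positivity) (by linarith) he2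
        have h3 : B p.1 * B p.2 ≤ B 0 * B N := hpN ▸ hBsub p.1 p.2
        rw [norm_mul]
        calc ‖a p.1‖ * ‖b p.2‖
            ≤ (c1 * (1+(p.1:ℝ))^e1 * B p.1) * (c2 * (1+(p.2:ℝ))^e2 * B p.2) := by
              apply mul_le_mul (ha p.1) (hb p.2) (norm_nonneg _) ?_
              have := (hBpos p.1).le
              positivity
          _ = (c1 * c2) * ((1+(p.1:ℝ))^e1 * (1+(p.2:ℝ))^e2) * (B p.1 * B p.2) := by ring
          _ ≤ (c1 * c2) * ((1+(N:ℝ))^e1 * (1+(N:ℝ))^e2) * (B 0 * B N) := by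
              apply mul_le_mul (mul_le_mul_of_nonneg_left ?_ (by positivity)) h3
                (mul_pos (hBpos p.1) (hBpos p.2)).le (by positivity)
              exact mul_le_mul h1 h2 (by positivity) (by positivity)
          _ = (c1 * c2 * B 0) * ((1+(N:ℝ))^e1 * (1+(N:ℝ))^e2) * B N := by ring
    _ = ((N:ℝ)+1) * ((c1 * c2 * B 0) * ((1+(N:ℝ))^e1 * (1+(N:ℝ))^e2) * B N) := by
        rw [Finset.sum_const, Finset.Nat.card_antidiagonal]
        push_cast
        ring
    _ = (c1 * c2 * B 0) * (1+(N:ℝ))^(e1+e2+1) * B N := by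
        rw [Real.rpow_add (by positivity : (0:ℝ) < 1+(N:ℝ)),
          Real.rpow_add (by positivity : (0:ℝ) < 1+(N:ℝ)), Real.rpow_one]
        ring

lemma double (hBpos : ∀ n, 0 < B n) (hBmono : Monotone B)
    (hBsub : ∀ m n : ℕ, B m * B n ≤ B 0 * B (m + n)) {f : ℂ → ℂ} {c e : ℝ}
    (hf : Differentiable ℂ f) (hc : 0 ≤ c) (he : 0 ≤ e)
    (hbd : ∀ n, ‖iteratedDeriv n f 0‖ ≤ c * (1+(n:ℝ))^e * ((n ! : ℝ) * B n)⁻¹)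
    {a : ℕ → ℂ} {c1 e1 : ℝ} (hc1 : 0 ≤ c1) (he1 : 0 ≤ e1)
    (ha : ∀ n, ‖a n‖ ≤ c1 * (1+(n:ℝ))^e1 * B n)
    {b : ℕ → ℂ} {c2 e2 : ℝ} (hc2 : 0 ≤ c2) (he2 : 0 ≤ e2)
    (hb : ∀ n, ‖b n‖ ≤ c2 * (1+(n:ℝ))^e2 * B n) (z : ℂ) :
    ∑' m : ℕ, b m * ∑' n : ℕ, a n * iteratedDeriv (n + m) f z
      = ∑' N : ℕ, (∑ p ∈ Finset.HasAntidiagonal.antidiagonal N, a p.1 * b p.2) * iteratedDeriv N f z := by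
  set u : ℕ × ℕ → ℂ := fun p => b p.1 * (a p.2 * iteratedDeriv (p.2 + p.1) f z) with hu_def
  set R := ‖z‖ with hR
  have hRnn : 0 ≤ R := norm_nonneg z
  set K : ℝ := c2 * (c1 * (c * Mf e R * B 0)) with hK
  have hKnn : 0 ≤ K := by
    have h1 := Mf_nonneg he hRnn
    have h2 := (hBpos 0).le
    positivity
  set v : ℕ → ℝ := fun m => (1+(m:ℝ))^(e+e2) * (1:ℝ)^m / (m !) with hv
  set w : ℕ → ℝ := fun n => (1+(n:ℝ))^(e+e1) * (1:ℝ)^n / (n !) with hw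
  have hunorm : ∀ p : ℕ × ℕ, ‖u p‖ ≤ K * (v p.1 * w p.2) := by
    rintro ⟨m, n⟩
    simp only [hu_def, norm_mul]
    have hBm := fBpos hBpos m
    have hBn := fBpos hBpos n
    have hd : ‖iteratedDeriv (n + m) f z‖
        ≤ (c * Mf e R) * (B 0 * ((1 + (n:ℝ)) ^ e * ((n ! : ℝ) * B n)⁻¹)
            * ((1 + (m:ℝ)) ^ e * ((m ! : ℝ) * B m)⁻¹)) := by
      refine (deriv_bound hBpos hBmono hf hc he hbd hRnn (n+m) le_rfl).trans ?_
      have h2 := term_est hBpos hBsub he n m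
      have hMnn : 0 ≤ c * Mf e R := by
        have := Mf_nonneg he hRnn; positivity
      calc (c * Mf e R) * (1+((n+m : ℕ):ℝ))^e * (((n+m)! : ℝ) * B (n+m))⁻¹
          = (c * Mf e R) * ((1 + ((n:ℝ) + m)) ^ e * (((n+m)! : ℝ) * B (n+m))⁻¹) := by
            push_cast; ring
        _ ≤ (c * Mf e R) * (B 0 * ((1 + (n:ℝ)) ^ e * ((n ! : ℝ) * B n)⁻¹)
              * ((1 + (m:ℝ)) ^ e * ((m ! : ℝ) * B m)⁻¹)) := mul_le_mul_of_nonneg_left h2 hMnn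
    calc ‖b m‖ * (‖a n‖ * ‖iteratedDeriv (n + m) f z‖)
        ≤ (c2 * (1+(m:ℝ))^e2 * B m) * ((c1 * (1+(n:ℝ))^e1 * B n) *
            ((c * Mf e R) * (B 0 * ((1 + (n:ℝ)) ^ e * ((n ! : ℝ) * B n)⁻¹)
              * ((1 + (m:ℝ)) ^ e * ((m ! : ℝ) * B m)⁻¹)))) := by
          have hbn : (0:ℝ) ≤ B n := (hBpos n).le
          have hbm : (0:ℝ) ≤ B m := (hBpos m).le
          apply mul_le_mul (hb m) ?_ (by positivity) (by positivity)
          apply mul_le_mul (ha n) hd (norm_nonneg _) (by positivity)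
      _ = K * (v m * w n) := by
          rw [hK, hv, hw]
          simp only []
          rw [ Real.rpow_add (by positivity : (0:ℝ) < 1+(m:ℝ)),
            Real.rpow_add (by positivity : (0:ℝ) < 1+(n:ℝ))]
          have h4 : ((n !:ℝ)) ≠ 0 := by positivity
          have h5 : ((m !:ℝ)) ≠ 0 := by positivity
          have h6 : B n ≠ 0 := (hBpos n).ne'
          have h7 : B m ≠ 0 := (hBpos m).ne'
          field_simp
          ring
  have hvs : Summable v := summable_mf (by linarith) zero_le_one
  have hws : Summable w := summable_mf (by linarith) zero_le_one
  have hsumKv : Summable (fun p : ℕ × ℕ => K * (v p.1 * w p.2)) :=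
    Summable.mul_left K (hvs.mul_of_nonneg hws (fun m => by positivity) (fun n => by positivity))
  have hu : Summable u := Summable.of_norm_bounded hsumKv hunorm
  calc ∑' m : ℕ, b m * ∑' n : ℕ, a n * iteratedDeriv (n + m) f z
      = ∑' m : ℕ, ∑' n : ℕ, u (m, n) := by
        congr 1; funext m; rw [← tsum_mul_left]
    _ = ∑' p : ℕ × ℕ, u p := (Summable.tsum_prod' hu fun m => hu.prod_factor m).symm
    _ = ∑' N : ℕ, ∑ p ∈ Finset.HasAntidiagonal.antidiagonal N, u p := tsum_antidiag hu
    _ = ∑' N : ℕ, (∑ p ∈ Finset.HasAntidiagonal.antidiagonal N, a p.1 * b p.2) * iteratedDeriv N f z := by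
        congr 1; funext N
        rw [Finset.sum_mul]
        conv_rhs => rw [← Finset.HasAntidiagonal.map_swap_antidiagonal (n := N)]
        rw [Finset.sum_map]
        apply Finset.sum_congr rfl
        rintro ⟨m, n⟩ hp
        have hpN : m + n = N := Finset.HasAntidiagonal.mem_antidiagonal.mp hp
        simp only [hu_def, Function.Embedding.coeFn_mk, Prod.swap_prod_mk]
        rw [show n + m = N from by omega]
        ring

end StmtAux
/-- `domSeq phi f g` : the partial sums of `∑ₙ (coeff n phi)·f⁽ⁿ⁾` converge to `g`
uniformly on compact subsets of `ℂ`; i.e. `f ∈ dom phi(D)` and `phi(D)f = g`. -/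
def domSeq (phi : PowerSeries ℂ) (f g : ℂ → ℂ) : Prop :=
  TendstoLocallyUniformly
    (fun (N : ℕ) (z : ℂ) =>
      ∑ n ∈ Finset.range N, (PowerSeries.coeff n) phi * iteratedDeriv n f z)
    g Filter.atTop

/-- `phi ≺ ⟨n!Bₙ⟩` for a formal power series `phi` (note `phi⁽ⁿ⁾(0) = n!·(coeff n phi)`). -/
def psPrec (B : ℕ → ℝ) (phi : PowerSeries ℂ) : Prop :=
  ∃ c : ℝ, 0 < c ∧ ∃ e : ℝ, 0 ≤ e ∧ ∀ n : ℕ,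
    ‖(n ! : ℂ) * (PowerSeries.coeff n) phi‖ <
      c * (1 + (n : ℝ)) ^ e * ((n ! : ℝ) * B n)

/-- `h ≺ ⟨(n!Bₙ)⁻¹⟩` for an entire function `h`. -/
def funPrecInv (B : ℕ → ℝ) (h : ℂ → ℂ) : Prop :=
  ∃ c : ℝ, 0 < c ∧ ∃ e : ℝ, 0 ≤ e ∧ ∀ n : ℕ,
    ‖iteratedDeriv n h 0‖ < c * (1 + (n : ℝ)) ^ e * ((n ! : ℝ) * B n)⁻¹

/-- Lemma 3.1: if `B` is increasing, positive, `BₘBₙ ≤ B₀B_{m+n}`,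
`phi, psi ≺ ⟨n!Bₙ⟩` and the entire function `f` satisfies `f ≺ ⟨(n!Bₙ)⁻¹⟩`, then
`phi·psi ≺ ⟨n!Bₙ⟩`, `f ∈ dom phi(D)`, `phi(D)f ≺ ⟨(n!Bₙ)⁻¹⟩`, and
`psi(D)(phi(D)f) = (phi·psi)(D)f`. -/
theorem stmt11 (B : ℕ → ℝ) (hBpos : ∀ n, 0 < B n) (hBmono : Monotone B)
    (hBsub : ∀ m n : ℕ, B m * B n ≤ B 0 * B (m + n))
    (phi psi : PowerSeries ℂ) (hphi : psPrec B phi) (hpsi : psPrec B psi)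
    (f : ℂ → ℂ) (hf : Differentiable ℂ f) (hfprec : funPrecInv B f) :
    psPrec B (phi * psi) ∧
    ∃ g h : ℂ → ℂ, domSeq phi f g ∧ funPrecInv B g ∧
      domSeq psi g h ∧ domSeq (phi * psi) f h := by
  obtain ⟨c1, hc1, e1, he1, h1⟩ := hphi
  obtain ⟨c2, hc2, e2, he2, h2⟩ := hpsi
  obtain ⟨c, hc, e, he, hfb⟩ := hfprec
  set a : ℕ → ℂ := fun n => (PowerSeries.coeff n) phi with ha_def
  set b : ℕ → ℂ := fun n => (PowerSeries.coeff n) psi with hb_def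
  have hfacpos : ∀ n : ℕ, (0:ℝ) < (n ! : ℝ) := fun n => by exact_mod_cast Nat.factorial_pos n
  have hcoeff : ∀ (c' e' : ℝ) (x : ℕ → ℂ),
      (∀ n : ℕ, ‖(n ! : ℂ) * x n‖ < c' * (1 + (n : ℝ)) ^ e' * ((n ! : ℝ) * B n)) →
      ∀ n, ‖x n‖ ≤ c' * (1+(n:ℝ))^e' * B n := by
    intro c' e' x hx n
    have h := hx n
    rw [norm_mul, Complex.norm_natCast,
      show c' * (1 + (n:ℝ)) ^ e' * ((n ! : ℝ) * B n)
        = (n ! : ℝ) * (c' * (1 + (n:ℝ)) ^ e' * B n) from by ring] at h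
    exact ((mul_lt_mul_iff_right₀ (hfacpos n)).mp h).le
  have ha : ∀ n, ‖a n‖ ≤ c1 * (1+(n:ℝ))^e1 * B n := hcoeff c1 e1 a h1
  have hb : ∀ n, ‖b n‖ ≤ c2 * (1+(n:ℝ))^e2 * B n := hcoeff c2 e2 b h2
  have hbd : ∀ n, ‖iteratedDeriv n f 0‖ ≤ c * (1+(n:ℝ))^e * ((n ! : ℝ) * B n)⁻¹ :=
    fun n => (hfb n).le
  have hB0 := hBpos 0
  -- part (i)
  have habN : ∀ N : ℕ, ‖(PowerSeries.coeff N) (phi * psi)‖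
      ≤ (c1 * c2 * B 0) * (1+(N:ℝ))^(e1+e2+1) * B N := by
    intro N
    rw [PowerSeries.coeff_mul]
    exact coeff_mul_bound hBpos hBsub hc1.le he1 hc2.le he2 ha hb N
  have hpart1 : psPrec B (phi * psi) := by
    refine ⟨c1 * c2 * B 0 + 1, by positivity, e1+e2+1, by positivity, fun n => ?_⟩
    have hXpos : (0:ℝ) < (1+(n:ℝ))^(e1+e2+1) * ((n ! : ℝ) * B n) :=
      mul_pos (Real.rpow_pos_of_pos (by positivity) _) (fBpos hBpos n)
    calc ‖(n ! : ℂ) * (PowerSeries.coeff n) (phi * psi)‖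
        = (n ! : ℝ) * ‖(PowerSeries.coeff n) (phi * psi)‖ := by
          rw [norm_mul, Complex.norm_natCast]
      _ ≤ (n ! : ℝ) * ((c1 * c2 * B 0) * (1+(n:ℝ))^(e1+e2+1) * B n) :=
          mul_le_mul_of_nonneg_left (habN n) (hfacpos n).le
      _ = (c1 * c2 * B 0) * ((1+(n:ℝ))^(e1+e2+1) * ((n ! : ℝ) * B n)) := by ring
      _ < (c1 * c2 * B 0 + 1) * ((1+(n:ℝ))^(e1+e2+1) * ((n ! : ℝ) * B n)) := by nlinarith
      _ = (c1 * c2 * B 0 + 1) * (1+(n:ℝ))^(e1+e2+1) * ((n ! : ℝ) * B n) := by ring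
  -- the function g = phi(D) f
  set g : ℂ → ℂ := fun z => ∑' n : ℕ, a n * iteratedDeriv n f z with hg_def
  have hdomg : domSeq phi f g := convSum hBpos hBmono hf hc.le he hbd hc1.le he1 ha
  set Cg : ℝ := c * c1 * B 0 * Mf (e+e1) 1 with hCg
  have hCgnn : 0 ≤ Cg := by
    have := Mf_nonneg (e := e+e1) (r := 1) (by linarith) zero_le_one
    positivity
  have hgbd : ∀ m, ‖iteratedDeriv m g 0‖ ≤ Cg * (1+(m:ℝ))^e * ((m ! : ℝ) * B m)⁻¹ :=
    fun m => gf_bound hBpos hBmono hBsub hf hc.le he hbd hc1.le he1 ha m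
  have hgdiff : Differentiable ℂ g := gf_diff hBpos hBmono hf hc.le he hbd hc1.le he1 ha
  have hgprec : funPrecInv B g := by
    refine ⟨Cg + 1, by positivity, e, he, fun m => ?_⟩
    have hXpos : (0:ℝ) < (1+(m:ℝ))^e * ((m ! : ℝ) * B m)⁻¹ :=
      mul_pos (Real.rpow_pos_of_pos (by positivity) _) (inv_pos.mpr (fBpos hBpos m))
    calc ‖iteratedDeriv m g 0‖ ≤ Cg * (1+(m:ℝ))^e * ((m ! : ℝ) * B m)⁻¹ := hgbd m
      _ = Cg * ((1+(m:ℝ))^e * ((m ! : ℝ) * B m)⁻¹) := by ring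
      _ < (Cg + 1) * ((1+(m:ℝ))^e * ((m ! : ℝ) * B m)⁻¹) := by nlinarith
      _ = (Cg + 1) * (1+(m:ℝ))^e * ((m ! : ℝ) * B m)⁻¹ := by ring
  -- the function h = psi(D) g
  set h : ℂ → ℂ := fun z => ∑' m : ℕ, b m * iteratedDeriv m g z with hh_def
  have hdomh : domSeq psi g h := convSum hBpos hBmono hgdiff hCgnn he hgbd hc2.le he2 hb
  -- h is also (phi*psi)(D) f
  have hdomh2 : domSeq (phi * psi) f h := by
    have hconv := convSum hBpos hBmono hf hc.le he hbd (c' := c1 * c2 * B 0)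
      (e' := e1+e2+1) (by positivity) (by positivity) habN
    have heq : (fun z => ∑' N : ℕ, (PowerSeries.coeff N) (phi * psi) * iteratedDeriv N f z)
        = h := by
      funext z
      have hig : ∀ m : ℕ, iteratedDeriv m g = fun z => ∑' n : ℕ, a n * iteratedDeriv (n + m) f z :=
        fun m => iter_gf hBpos hBmono hc1.le he1 ha m hf hc.le he hbd
      calc (∑' N : ℕ, (PowerSeries.coeff N) (phi * psi) * iteratedDeriv N f z)
          = ∑' N : ℕ, (∑ p ∈ Finset.HasAntidiagonal.antidiagonal N, a p.1 * b p.2) * iteratedDeriv N f z := by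
            congr 1; funext N; rw [PowerSeries.coeff_mul]
        _ = ∑' m : ℕ, b m * ∑' n : ℕ, a n * iteratedDeriv (n + m) f z :=
            (double hBpos hBmono hBsub hf hc.le he hbd hc1.le he1 ha hc2.le he2 hb z).symm
        _ = h z := by
            rw [hh_def]
            congr 1; funext m; rw [hig m]
    rw [← heq]
    exact hconv
  exact ⟨hpart1, g, h, hdomg, hgprec, hdomh, hdomh2⟩
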